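/- Let χ be an edge coloring of K_n where every color class is tripartite. For each vertex v and t ≥ 1, let d^1(v) ≥ d^2(v) ≥ … be the sorted multiplicities of colors on edges incident to v. Then Σ_{v} (d^1(v)+⋯+d^t(v)) ≤ (1 − 3^{−t}) n². -/

import Mathlib

/-- `colorCount n χ v c`: the number of edges at `v` with color `c`. -/
def colorCount (n : ℕ) (χ : Fin n → Fin n → ℕ) (v : Fin n) (c : ℕ) : ℕ :=
  (Finset.univ.filter fun u => u ≠ v ∧ χ v u = c).card

open Finset

lemma count_fixed {m : ℕ} (T : Finset (Fin m)) (f : Fin m → Fin 3) :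
    (Finset.univ.filter fun σ : Fin m → Fin 3 => ∀ a ∈ T, σ a = f a).card
      = 3 ^ (m - T.card) := by
  classical
  have hset : (Finset.univ.filter fun σ : Fin m → Fin 3 => ∀ a ∈ T, σ a = f a)
      = Fintype.piFinset (fun a => if a ∈ T then {f a} else Finset.univ) := by
    ext σ
    simp only [mem_filter, mem_univ, true_and, Fintype.mem_piFinset]
    constructor
    · intro h a
      by_cases ha : a ∈ T
      · simp [ha, h a ha]
      · simp [ha]
    · intro h a ha
      have := h a
      simpa [ha] using this
  rw [hset, Fintype.card_piFinset]
  have hcard : ∀ a : Fin m, (if a ∈ T then ({f a} : Finset (Fin 3)) else Finset.univ).card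
      = if a ∈ T then 1 else 3 := by
    intro a; split <;> simp
  rw [Finset.prod_congr rfl (fun a _ => hcard a)]
  rw [← Finset.prod_filter_mul_prod_filter_not Finset.univ (· ∈ T)]
  have h1 : Finset.univ.filter (· ∈ T) = T := by ext a; simp
  have h2 : Finset.univ.filter (· ∉ T) = Tᶜ := by ext a; simp
  rw [h1, h2]
  rw [Finset.prod_ite_of_true (by simp) _ _, Finset.prod_ite_of_false (by simp) _ _]
  simp [Finset.card_compl]

lemma count_fixed' {m : ℕ} (T : Finset ℕ) (hT : ∀ c ∈ T, c < m) (f : ℕ → Fin 3) :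
    (Finset.univ.filter fun σ : Fin m → Fin 3 =>
      ∀ a : Fin m, (a : ℕ) ∈ T → σ a = f (a : ℕ)).card = 3 ^ (m - T.card) := by
  classical
  have h := count_fixed (T.attachFin hT) (fun a => f (a : ℕ))
  rw [Finset.card_attachFin] at h
  rw [← h]
  congr 1
  apply Finset.filter_congr
  intro σ _
  simp [Finset.mem_attachFin]

set_option maxHeartbeats 1000000 in
/-- If every color class of an edge coloring of `K_n` is tripartite, then for any `t ≥ 1`,
`Σ_v (d¹(v) + ⋯ + dᵗ(v)) ≤ (1 − 3^{−t}) n²`.  Here the sum of the `t` largest color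
multiplicities at `v` is expressed by quantifying over every choice of `t` distinct
colors at each vertex (the top-`t` sum is the maximum over such choices). -/
theorem stmt_4 (n t : ℕ) (ht : 1 ≤ t) (χ : Fin n → Fin n → ℕ)
    (hsymm : ∀ i j, χ i j = χ j i)
    (htri : ∀ c : ℕ, ∃ p : Fin n → Fin 3,
      ∀ i j : Fin n, i ≠ j → χ i j = c → p i ≠ p j)
    (S : Fin n → Finset ℕ) (hS : ∀ v, (S v).card = t) :
    3 ^ t * ∑ v : Fin n, ∑ c ∈ S v, colorCount n χ v c ≤ (3 ^ t - 1) * n ^ 2 := by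
  classical
  rcases Nat.eq_zero_or_pos n with rfl | hn
  · simp
  choose p hp using htri
  set m : ℕ := (Finset.univ.biUnion S).sup id + 1 with hm
  have hcm : ∀ v : Fin n, ∀ c ∈ S v, c < m := by
    intro v c hc
    have : c ∈ Finset.univ.biUnion S := Finset.mem_biUnion.2 ⟨v, Finset.mem_univ v, hc⟩
    have := Finset.le_sup (f := id) this
    simp only [id] at this
    omega
  obtain ⟨v0⟩ : Nonempty (Fin n) := ⟨⟨0, hn⟩⟩
  have htm : t ≤ m := by
    have hsub : S v0 ⊆ Finset.range m := fun c hc => Finset.mem_range.2 (hcm v0 c hc)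
    have := Finset.card_le_card hsub
    simpa [hS v0] using this
  set P : Fin n → (Fin m → Fin 3) → Prop :=
    fun v σ => ∀ a : Fin m, (a : ℕ) ∈ S v → σ a = p (a : ℕ) v with hP
  set Q : Fin n → Fin n → ℕ :=
    fun v u => (Finset.univ.filter fun σ : Fin m → Fin 3 => P v σ ∧ P u σ).card with hQ
  set g : Fin n → Fin n → ℕ := fun v u => if u = v ∨ χ v u ∉ S v then 1 else 0 with hg
  -- single-vertex count
  have hsingle : ∀ v : Fin n,
      (Finset.univ.filter fun σ : Fin m → Fin 3 => P v σ).card = 3 ^ (m - t) := by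
    intro v
    have := count_fixed' (S v) (hcm v) (fun c => p c v)
    rw [hS v] at this
    exact this
  -- diagonal
  have hdiag : ∀ v : Fin n, Q v v = 3 ^ (m - t) := by
    intro v
    rw [hQ]
    simp only [and_self]
    exact hsingle v
  -- general upper bound
  have hQle : ∀ v u : Fin n, Q v u ≤ 3 ^ (m - t) := by
    intro v u
    rw [hQ, ← hsingle v]
    exact Finset.card_le_card (Finset.monotone_filter_right _ (fun σ _ h => h.1))
  -- doubly bad : zero
  have hbb : ∀ v u : Fin n, u ≠ v → χ v u ∈ S v → χ u v ∈ S u → Q v u = 0 := by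
    intro v u huv h1 h2
    rw [hQ, Finset.card_eq_zero]
    rw [Finset.filter_eq_empty_iff]
    rintro σ - ⟨hPv, hPu⟩
    set c : ℕ := χ v u with hc
    have hlt : c < m := hcm v c h1
    have e1 : σ ⟨c, hlt⟩ = p c v := hPv ⟨c, hlt⟩ h1
    have hcu : c ∈ S u := by rwa [hsymm u v] at h2
    have e2 : σ ⟨c, hlt⟩ = p c u := hPu ⟨c, hlt⟩ hcu
    exact hp c v u (fun h => huv h.symm) rfl (e1.symm.trans e2)
  -- singly bad : ≤ 3^(m-t-1), with t+1 ≤ m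
  have hsb : ∀ v u : Fin n, u ≠ v → χ v u ∈ S v → χ u v ∉ S u →
      2 * Q v u ≤ 3 ^ (m - t) := by
    intro v u huv h1 h2
    set c : ℕ := χ v u with hc
    have hcu : c ∉ S u := by rwa [hsymm u v] at h2
    have hsubm : (insert c (S u) : Finset ℕ) ⊆ Finset.range m := by
      intro x hx
      rcases Finset.mem_insert.1 hx with rfl | hx
      · exact Finset.mem_range.2 (hcm v c h1)
      · exact Finset.mem_range.2 (hcm u x hx)
    have hcard1 : (insert c (S u)).card = t + 1 := by
      rw [Finset.card_insert_of_notMem hcu, hS u]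
    have ht1m : t + 1 ≤ m := by
      have := Finset.card_le_card hsubm
      simpa [hcard1] using this
    have hbound : Q v u ≤ 3 ^ (m - (t + 1)) := by
      rw [hQ]
      have := count_fixed' (m := m) (insert c (S u))
        (fun x hx => Finset.mem_range.1 (hsubm hx))
        (fun c' => if c' = c then p c v else p c' u)
      rw [hcard1] at this
      rw [← this]
      apply Finset.card_le_card
      apply Finset.monotone_filter_right
      rintro σ - ⟨hPv, hPu⟩ a ha
      rcases Finset.mem_insert.1 ha with hac | hau
      · have : σ a = p (a : ℕ) v := hPv a (by rw [hac]; exact h1)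
        rw [this, hac]
        simp
      · have hne : (a : ℕ) ≠ c := fun h => hcu (h ▸ hau)
        have : σ a = p (a : ℕ) u := hPu a hau
        rw [this]
        simp [hne]
    calc 2 * Q v u ≤ 2 * 3 ^ (m - (t + 1)) := by omega
      _ ≤ 3 * 3 ^ (m - (t + 1)) := by omega
      _ = 3 ^ (m - t) := by
          rw [← pow_succ']
          congr 1
          omega
  -- Q symmetric
  have hQsymm : ∀ v u : Fin n, Q v u = Q u v := by
    intro v u
    rw [hQ]
    simp only [and_comm]
  -- key per-pair bound
  have hkey : ∀ v u : Fin n, 2 * Q v u ≤ 3 ^ (m - t) * (g v u + g u v) := by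
    intro v u
    by_cases hvu : u = v
    · subst hvu
      rw [hdiag u]
      simp [hg]
      omega
    by_cases h1 : χ v u ∈ S v
    · by_cases h2 : χ u v ∈ S u
      · rw [hbb v u hvu h1 h2]
        omega
      · have := hsb v u hvu h1 h2
        have hg1 : g v u = 0 := by simp [hg, hvu, h1]
        have hg2 : g u v = 1 := by
          have : χ u v ∉ S u := h2
          simp [hg, this]
        rw [hg1, hg2]
        omega
    · by_cases h2 : χ u v ∈ S u
      · have hne : v ≠ u := fun h => hvu h.symm
        have h2' : χ v u ∉ S v := h1
        have := hsb u v hne h2 (by rwa [hsymm v u] at h2')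
        rw [hQsymm v u]
        have hg1 : g v u = 1 := by simp [hg, h1]
        have hg2 : g u v = 0 := by
          have hne' : ¬(v = u) := hne
          simp [hg, hne', h2]
        rw [hg1, hg2]
        omega
      · have hg1 : g v u = 1 := by simp [hg, h1]
        have hg2 : g u v = 1 := by simp [hg, h2]
        rw [hg1, hg2]
        have := hQle v u
        omega
  -- summations
  set B : (Fin m → Fin 3) → ℕ := fun σ => (Finset.univ.filter fun v => P v σ).card with hB
  have hBsum : ∀ σ, B σ = ∑ v : Fin n, if P v σ then 1 else 0 := by
    intro σ; exact Finset.card_filter _ _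
  have sum1 : ∑ σ : Fin m → Fin 3, B σ = n * 3 ^ (m - t) := by
    rw [Finset.sum_congr rfl (fun σ _ => hBsum σ), Finset.sum_comm]
    have hv : ∀ v : Fin n, (∑ σ : Fin m → Fin 3, if P v σ then 1 else 0) = 3 ^ (m - t) := by
      intro v
      rw [← hsingle v, Finset.card_filter]
    rw [Finset.sum_congr rfl (fun v _ => hv v)]
    simp [Finset.sum_const, Finset.card_univ, mul_comm]
  have sum2 : ∑ σ : Fin m → Fin 3, B σ ^ 2 = ∑ v : Fin n, ∑ u : Fin n, Q v u := by
    have hBσ : ∀ σ, B σ ^ 2 = ∑ v : Fin n, ∑ u : Fin n, (if P v σ ∧ P u σ then 1 else 0) := by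
      intro σ
      rw [hBsum σ, sq, Finset.sum_mul_sum]
      refine Finset.sum_congr rfl fun v _ => Finset.sum_congr rfl fun u _ => ?_
      by_cases h1 : P v σ
      · by_cases h2 : P u σ
        · rw [if_pos h1, if_pos h2, if_pos ⟨h1, h2⟩, mul_one]
        · rw [if_neg h2, if_neg (show ¬(P v σ ∧ P u σ) from fun h => h2 h.2), mul_zero]
      · rw [if_neg h1, if_neg (show ¬(P v σ ∧ P u σ) from fun h => h1 h.1), zero_mul]
    rw [Finset.sum_congr rfl (fun σ _ => hBσ σ), Finset.sum_comm]
    refine Finset.sum_congr rfl fun v _ => ?_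
    rw [Finset.sum_comm]
    refine Finset.sum_congr rfl fun u _ => ?_
    exact (Finset.card_filter _ _).symm
  have cs : (∑ σ : Fin m → Fin 3, B σ) ^ 2 ≤ 3 ^ m * ∑ σ : Fin m → Fin 3, B σ ^ 2 := by
    have h := Finset.sum_mul_sq_le_sq_mul_sq (R := ℕ) Finset.univ (fun _ => 1) B
    simp only [one_mul, one_pow] at h
    calc (∑ σ : Fin m → Fin 3, B σ) ^ 2
        ≤ (∑ _σ : Fin m → Fin 3, 1) * ∑ σ : Fin m → Fin 3, B σ ^ 2 := h
      _ = 3 ^ m * ∑ σ : Fin m → Fin 3, B σ ^ 2 := by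
          rw [Finset.sum_const, Finset.card_univ, smul_eq_mul, mul_one]
          congr 1
          rw [Fintype.card_fun]
          simp
  set R : ℕ := ∑ v : Fin n, ∑ u : Fin n, g v u with hR
  set A : ℕ := ∑ v : Fin n, ∑ u : Fin n, Q v u with hA
  have sum3 : A ≤ 3 ^ (m - t) * R := by
    have h2 : 2 * A ≤ 3 ^ (m - t) * (2 * R) := by
      calc 2 * A = ∑ v : Fin n, ∑ u : Fin n, 2 * Q v u := by
            rw [hA, Finset.mul_sum]
            exact Finset.sum_congr rfl fun v _ => by rw [Finset.mul_sum]
        _ ≤ ∑ v : Fin n, ∑ u : Fin n, 3 ^ (m - t) * (g v u + g u v) :=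
            Finset.sum_le_sum fun v _ => Finset.sum_le_sum fun u _ => hkey v u
        _ = 3 ^ (m - t) * (2 * R) := by
            have e1 : ∑ v : Fin n, ∑ u : Fin n, 3 ^ (m - t) * (g v u + g u v)
                = 3 ^ (m - t) * ∑ v : Fin n, ∑ u : Fin n, (g v u + g u v) := by
              rw [Finset.mul_sum]
              exact Finset.sum_congr rfl fun v _ => (Finset.mul_sum _ _ _).symm
            have e2 : ∑ v : Fin n, ∑ u : Fin n, (g v u + g u v) = 2 * R := by
              have e3 : ∑ v : Fin n, ∑ u : Fin n, (g v u + g u v)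
                  = (∑ v : Fin n, ∑ u : Fin n, g v u) + ∑ v : Fin n, ∑ u : Fin n, g u v := by
                rw [← Finset.sum_add_distrib]
                exact Finset.sum_congr rfl fun v _ => Finset.sum_add_distrib
              have h4 : ∑ v : Fin n, ∑ u : Fin n, g u v = R := by
                rw [hR]; exact Finset.sum_comm
              have h5 : ∑ v : Fin n, ∑ u : Fin n, g v u = R := hR.symm
              rw [e3, h5, h4, two_mul]
            rw [e1, e2]
    have hrw : 3 ^ (m - t) * (2 * R) = 2 * (3 ^ (m - t) * R) := by ring
    rw [hrw] at h2
    omega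
  -- relate R to the colored degree sums
  have hRB : R + (∑ v : Fin n, ∑ c ∈ S v, colorCount n χ v c) = n * n := by
    have hv : ∀ v : Fin n,
        (∑ u : Fin n, g v u) + (∑ c ∈ S v, colorCount n χ v c) = n := by
      intro v
      have hgood : ∑ u : Fin n, g v u
          = (Finset.univ.filter fun u : Fin n => u = v ∨ χ v u ∉ S v).card :=
        (Finset.card_filter _ _).symm
      have hbad : ∑ c ∈ S v, colorCount n χ v c
          = (Finset.univ.filter fun u : Fin n => ¬(u = v ∨ χ v u ∉ S v)).card := by
        have e1 : ∀ c : ℕ, colorCount n χ v c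
            = ∑ u : Fin n, if u ≠ v ∧ χ v u = c then 1 else 0 :=
          fun c => Finset.card_filter _ _
        rw [Finset.sum_congr rfl fun c _ => e1 c, Finset.sum_comm, Finset.card_filter]
        refine Finset.sum_congr rfl fun u _ => ?_
        by_cases hu : u = v
        · simp [hu]
        · have e4 : ∀ c ∈ S v, (if u ≠ v ∧ χ v u = c then (1:ℕ) else 0)
              = if χ v u = c then 1 else 0 := by
            intro c _
            simp [hu]
          rw [Finset.sum_congr rfl e4, Finset.sum_ite_eq]
          simp [hu]
      have := Finset.card_filter_add_card_filter_not
        (s := (Finset.univ : Finset (Fin n))) (p := fun u : Fin n => u = v ∨ χ v u ∉ S v)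
      rw [hgood, hbad]
      simpa using this
    calc R + (∑ v : Fin n, ∑ c ∈ S v, colorCount n χ v c)
        = ∑ v : Fin n, ((∑ u : Fin n, g v u) + ∑ c ∈ S v, colorCount n χ v c) := by
          rw [hR, Finset.sum_add_distrib]
      _ = ∑ v : Fin n, (n : ℕ) := Finset.sum_congr rfl fun v _ => hv v
      _ = n * n := by simp [mul_comm]
  -- put everything together
  set k : ℕ := m - t with hk
  have hmtk : m = t + k := by omega
  have f1 : 3 ^ k * 3 ^ k * n ^ 2 ≤ 3 ^ k * 3 ^ k * (3 ^ t * R) := by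
    calc 3 ^ k * 3 ^ k * n ^ 2 = (n * 3 ^ k) ^ 2 := by ring
      _ = (∑ σ : Fin m → Fin 3, B σ) ^ 2 := by rw [sum1]
      _ ≤ 3 ^ m * ∑ σ : Fin m → Fin 3, B σ ^ 2 := cs
      _ = 3 ^ m * A := by rw [sum2]
      _ ≤ 3 ^ m * (3 ^ k * R) := Nat.mul_le_mul_left _ sum3
      _ = 3 ^ k * 3 ^ k * (3 ^ t * R) := by rw [hmtk, pow_add]; ring
  have f2 : n ^ 2 ≤ 3 ^ t * R :=
    Nat.le_of_mul_le_mul_left f1 (by positivity)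
  have hone : 1 ≤ 3 ^ t := Nat.one_le_pow _ _ (by norm_num)
  have f3 : 3 ^ t * (∑ v : Fin n, ∑ c ∈ S v, colorCount n χ v c) + n ^ 2 ≤ 3 ^ t * n ^ 2 := by
    calc 3 ^ t * (∑ v : Fin n, ∑ c ∈ S v, colorCount n χ v c) + n ^ 2
        ≤ 3 ^ t * (∑ v : Fin n, ∑ c ∈ S v, colorCount n χ v c) + 3 ^ t * R :=
          Nat.add_le_add_left f2 _
      _ = 3 ^ t * (R + ∑ v : Fin n, ∑ c ∈ S v, colorCount n χ v c) := by ring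
      _ = 3 ^ t * n ^ 2 := by rw [hRB]; ring
  have : (3 ^ t - 1) * n ^ 2 = 3 ^ t * n ^ 2 - n ^ 2 := by
    rw [Nat.sub_mul, one_mul]
  rw [this]
  omega
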